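/- Let H_1, …, H_L be Hermitian n×n complex matrices with Λ := max_{1≤i≤L} ‖H_i‖, let k ≥ 1, λ ∈ ℂ, κ := 2·5^{k−1}. Set V(λ/2) := exp(λ Σ_{i=1}^L H_i / 2) and D(λ/2) := R_{2k}(V(λ/2)) − R_{2k}(S^{(2k)}(λ/2)). Then ‖V(λ/2)† D(λ/2) + D(λ/2) V(λ/2)†‖ ≤ 4 (κ|λ|LΛ/2)^{2k+1} / (2k+1)! · exp([κ+1]|λ|LΛ/2). -/

import Mathlib

open scoped Nat Matrix.Norms.L2Operator
open scoped Matrix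

/-- The coefficient `p_k := 1 / (4 − 4^{1/(2k−1)})` in the recursive Trotter–Suzuki
construction. -/
noncomputable def suzukiP (k : ℕ) : ℝ :=
  1 / (4 - (4 : ℝ) ^ ((1 : ℝ) / (2 * (k : ℝ) - 1)))

/-- The `(2k)`-th order Trotter–Suzuki product formula `S^{(2k)}(λ)` for the Hermitian matrices
`H_1, …, H_L`: `suzuki H k λ = S^{(2k)}(λ)`, defined by
`S^{(2)}(λ) := ∏_{i=1}^L e^{λ H_i/2} · ∏_{i=L}^1 e^{λ H_i/2}` and, for `k ≥ 2`,
`S^{(2k)}(λ) := [S^{(2k−2)}(p_k λ)]^2 · S^{(2k−2)}((1−4p_k)λ) · [S^{(2k−2)}(p_k λ)]^2`. -/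
noncomputable def suzuki {n L : ℕ} (H : Fin L → Matrix (Fin n) (Fin n) ℂ) :
    ℕ → ℂ → Matrix (Fin n) (Fin n) ℂ
  | 0, _ => 1
  | 1, lam =>
      (List.ofFn fun i : Fin L => NormedSpace.exp ((lam / 2) • H i)).prod *
        (List.ofFn fun i : Fin L => NormedSpace.exp ((lam / 2) • H i.rev)).prod
  | k + 2, lam =>
      suzuki H (k + 1) ((suzukiP (k + 2) : ℂ) * lam) ^ 2 *
        suzuki H (k + 1) ((1 - 4 * (suzukiP (k + 2) : ℂ)) * lam) *
          suzuki H (k + 1) ((suzukiP (k + 2) : ℂ) * lam) ^ 2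

namespace TrotterAux

variable {n : ℕ}

lemma norm_one_le : ‖(1 : Matrix (Fin n) (Fin n) ℂ)‖ ≤ 1 := by
  have h := CStarRing.norm_star_mul_self (x := (1 : Matrix (Fin n) (Fin n) ℂ))
  simp only [star_one, one_mul] at h
  nlinarith [norm_nonneg (1 : Matrix (Fin n) (Fin n) ℂ)]

lemma norm_pow_le_pow (A : Matrix (Fin n) (Fin n) ℂ) (j : ℕ) : ‖A ^ j‖ ≤ ‖A‖ ^ j := by
  cases j with
  | zero => simpa using norm_one_le
  | succ j => exact norm_pow_le' A j.succ_pos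

/-- `f` is entire with Taylor coefficients bounded by `M^j/j!`. -/
def ExpBound (f : ℂ → Matrix (Fin n) (Fin n) ℂ) (M : ℝ) : Prop :=
  ∃ c : ℕ → Matrix (Fin n) (Fin n) ℂ,
    (∀ j, ‖c j‖ ≤ M ^ j / (j)!) ∧ ∀ μ : ℂ, HasSum (fun j => μ ^ j • c j) (f μ)

lemma ExpBound.congr {f g : ℂ → Matrix (Fin n) (Fin n) ℂ} {M : ℝ} (h : ExpBound f M)
    (hfg : ∀ μ, f μ = g μ) : ExpBound g M := by
  obtain ⟨c, hb, hs⟩ := h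
  exact ⟨c, hb, fun μ => hfg μ ▸ hs μ⟩

lemma ExpBound.mono {f : ℂ → Matrix (Fin n) (Fin n) ℂ} {M M' : ℝ} (h : ExpBound f M)
    (hM : 0 ≤ M) (hMM' : M ≤ M') : ExpBound f M' := by
  obtain ⟨c, hb, hs⟩ := h
  refine ⟨c, fun j => (hb j).trans ?_, hs⟩
  gcongr

lemma expBound_one : ExpBound (fun _ : ℂ => (1 : Matrix (Fin n) (Fin n) ℂ)) 0 := by
  refine ⟨fun j => if j = 0 then 1 else 0, fun j => ?_, fun μ => ?_⟩
  · cases j with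
    | zero => simpa using norm_one_le
    | succ j => simp
  · have : (fun j : ℕ => μ ^ j • (if j = 0 then (1 : Matrix (Fin n) (Fin n) ℂ) else 0)) =
        fun j : ℕ => if j = 0 then (1 : Matrix (Fin n) (Fin n) ℂ) else 0 := by
      funext j
      cases j with
      | zero => simp
      | succ j => simp
    rw [this]
    exact hasSum_ite_eq 0 (1 : Matrix (Fin n) (Fin n) ℂ)

lemma expBound_exp_half (A : Matrix (Fin n) (Fin n) ℂ) :
    ExpBound (fun μ : ℂ => NormedSpace.exp ((μ / 2) • A)) (‖A‖ / 2) := by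
  refine ⟨fun j => ((j)! : ℂ)⁻¹ • ((2 : ℂ)⁻¹) ^ j • A ^ j, fun j => ?_, fun μ => ?_⟩
  · rw [norm_smul, norm_smul, norm_pow]
    simp only [norm_inv, Complex.norm_natCast, RCLike.norm_ofNat]
    rw [div_pow, div_eq_mul_inv ((‖A‖:ℝ)^j), div_eq_mul_inv]
    calc ((j)! : ℝ)⁻¹ * ((2:ℝ)⁻¹ ^ j * ‖A ^ j‖)
        ≤ ((j)! : ℝ)⁻¹ * ((2:ℝ)⁻¹ ^ j * ‖A‖ ^ j) := by
          gcongr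
          · exact norm_pow_le_pow A j
      _ = ‖A‖ ^ j * ((2:ℝ) ^ j)⁻¹ * ((j)! : ℝ)⁻¹ := by rw [inv_pow]; ring
  · have h := NormedSpace.exp_series_hasSum_exp' (𝕂 := ℂ) ((μ / 2) • A)
    have : (fun j : ℕ => ((j)! : ℂ)⁻¹ • ((μ / 2) • A) ^ j) =
        fun j : ℕ => μ ^ j • ((j)! : ℂ)⁻¹ • ((2 : ℂ)⁻¹) ^ j • A ^ j := by
      funext j
      rw [smul_pow, smul_smul, smul_smul, smul_smul]
      congr 1
      rw [div_pow]
      simp only [div_eq_mul_inv, inv_pow]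
      ring
    rw [this] at h
    exact h

lemma ExpBound.scale {f : ℂ → Matrix (Fin n) (Fin n) ℂ} {M : ℝ} (h : ExpBound f M)
    (a : ℂ) (s : ℝ) (ha : ‖a‖ ≤ s) :
    ExpBound (fun μ => f (a * μ)) (s * M) := by
  obtain ⟨c, hb, hs⟩ := h
  have hs0 : 0 ≤ s := (norm_nonneg a).trans ha
  refine ⟨fun j => a ^ j • c j, fun j => ?_, fun μ => ?_⟩
  · rw [norm_smul, norm_pow, mul_pow, mul_div_assoc]
    gcongr
    exact hb j
  · have h2 := hs (a * μ)
    have : (fun j : ℕ => (a * μ) ^ j • c j) = fun j : ℕ => μ ^ j • a ^ j • c j := by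
      funext j
      rw [smul_smul, mul_pow, mul_comm]
    rwa [this] at h2

lemma ExpBound.mul {f g : ℂ → Matrix (Fin n) (Fin n) ℂ} {M N : ℝ}
    (hf : ExpBound f M) (hg : ExpBound g N) (hM : 0 ≤ M) (hN : 0 ≤ N) :
    ExpBound (fun μ => f μ * g μ) (M + N) := by
  obtain ⟨a, hab, has⟩ := hf
  obtain ⟨b, hbb, hbs⟩ := hg
  refine ⟨fun j => ∑ i ∈ Finset.range (j + 1), a i * b (j - i), fun j => ?_, fun μ => ?_⟩
  · calc ‖∑ i ∈ Finset.range (j + 1), a i * b (j - i)‖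
        ≤ ∑ i ∈ Finset.range (j + 1), ‖a i * b (j - i)‖ := norm_sum_le _ _
      _ ≤ ∑ i ∈ Finset.range (j + 1), M ^ i / (i)! * (N ^ (j - i) / (j - i)!) := by
          refine Finset.sum_le_sum fun i _ => ?_
          calc ‖a i * b (j - i)‖ ≤ ‖a i‖ * ‖b (j - i)‖ := norm_mul_le _ _
            _ ≤ M ^ i / (i)! * (N ^ (j - i) / (j - i)!) := by
                apply mul_le_mul (hab i) (hbb (j - i)) (norm_nonneg _)
                positivity
      _ = (M + N) ^ j / (j)! := by
          rw [add_pow, Finset.sum_div]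
          refine Finset.sum_congr rfl fun i hi => ?_
          have hij : i ≤ j := Finset.mem_range_succ_iff.mp hi
          have hfac : ((j.choose i : ℝ)) * (i)! * (j - i)! = (j)! := by
            exact_mod_cast Nat.choose_mul_factorial_mul_factorial hij
          have h1 : ((i)! : ℝ) ≠ 0 := Nat.cast_ne_zero.mpr (Nat.factorial_ne_zero i)
          have h2 : ((j - i)! : ℝ) ≠ 0 := Nat.cast_ne_zero.mpr (Nat.factorial_ne_zero (j - i))
          have h3 : ((j)! : ℝ) ≠ 0 := Nat.cast_ne_zero.mpr (Nat.factorial_ne_zero j)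
          field_simp
          rw [← hfac]
          ring
  · have hfa : Summable fun i => ‖μ ^ i • a i‖ := by
      apply Summable.of_nonneg_of_le (fun i => norm_nonneg _)
        (fun i => ?_) (Real.summable_pow_div_factorial (‖μ‖ * M))
      rw [norm_smul, norm_pow, mul_pow, mul_div_assoc]
      gcongr
      exact hab i
    have hfb : Summable fun i => ‖μ ^ i • b i‖ := by
      apply Summable.of_nonneg_of_le (fun i => norm_nonneg _)
        (fun i => ?_) (Real.summable_pow_div_factorial (‖μ‖ * N))
      rw [norm_smul, norm_pow, mul_pow, mul_div_assoc]
      gcongr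
      exact hbb i
    have h := hasSum_sum_range_mul_of_summable_norm hfa hfb
    rw [(has μ).tsum_eq, (hbs μ).tsum_eq] at h
    have heq : (fun j : ℕ => ∑ i ∈ Finset.range (j + 1), (μ ^ i • a i) * (μ ^ (j - i) • b (j - i)))
        = fun j : ℕ => μ ^ j • ∑ i ∈ Finset.range (j + 1), a i * b (j - i) := by
      funext j
      rw [Finset.smul_sum]
      refine Finset.sum_congr rfl fun i hi => ?_
      have hij : i ≤ j := Finset.mem_range_succ_iff.mp hi
      rw [smul_mul_smul_comm, ← pow_add, Nat.add_sub_cancel' hij]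
    rwa [heq] at h

lemma suzukiP_mem (m : ℕ) (hm : 2 ≤ m) : 0 < suzukiP m ∧ suzukiP m ≤ 1 / 2 := by
  rw [suzukiP]
  set t : ℝ := (4 : ℝ) ^ ((1 : ℝ) / (2 * (m : ℝ) - 1)) with ht
  have hm3 : (3 : ℝ) ≤ 2 * (m : ℝ) - 1 := by
    have : (2 : ℝ) ≤ (m : ℝ) := by exact_mod_cast hm
    linarith
  have hexp : (1 : ℝ) / (2 * (m : ℝ) - 1) ≤ 1 / 2 := by
    apply one_div_le_one_div_of_le <;> linarith
  have ht2 : t ≤ 2 := by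
    have h4 : (4 : ℝ) ^ ((1 : ℝ) / 2) = 2 := by
      rw [show (4 : ℝ) = 2 ^ (2 : ℕ) by norm_num, ← Real.rpow_natCast 2 2,
        ← Real.rpow_mul (by norm_num)]
      norm_num
    calc t ≤ (4 : ℝ) ^ ((1 : ℝ) / 2) :=
          Real.rpow_le_rpow_of_exponent_le (by norm_num) hexp
      _ = 2 := h4
  constructor
  · apply div_pos one_pos; linarith
  · rw [div_le_div_iff₀ (by linarith) (by norm_num)]
    linarith

lemma expBound_list {l : List (ℂ → Matrix (Fin n) (Fin n) ℂ)} (b : ℝ) (hb : 0 ≤ b)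
    (h : ∀ g ∈ l, ExpBound g b) :
    ExpBound (fun μ => (l.map (fun g => g μ)).prod) (l.length * b) := by
  induction l with
  | nil => simpa using (expBound_one (n := n)).mono le_rfl le_rfl
  | cons g t ih =>
    have h1 : ExpBound g b := h g (List.mem_cons_self)
    have h2 := ih fun g' hg' => h g' (List.mem_cons_of_mem _ hg')
    have h3 := h1.mul h2 hb (by positivity)
    refine (h3.congr fun μ => by simp).mono (by positivity) ?_
    simp only [List.length_cons]
    push_cast
    ring_nf
    exact le_refl _

lemma expBound_suzuki {L : ℕ} (H : Fin L → Matrix (Fin n) (Fin n) ℂ) (Λ : ℝ) (hΛ0 : 0 ≤ Λ)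
    (hH : ∀ i, ‖H i‖ ≤ Λ) (k : ℕ) :
    ExpBound (fun lam => suzuki H k lam) ((5 : ℝ) ^ (k - 1) * L * Λ) := by
  induction k using Nat.strong_induction_on with
  | _ k ih =>
    have hMnn : ∀ m : ℕ, (0:ℝ) ≤ (5 : ℝ) ^ (m : ℕ) * L * Λ := fun m => by positivity
    match k with
    | 0 =>
      refine (expBound_one (n := n)).mono le_rfl ?_ |>.congr fun μ => by rw [suzuki]
      positivity
    | 1 =>
      have hlist : ∀ f : Fin L → Matrix (Fin n) (Fin n) ℂ, (∀ i, ‖f i‖ ≤ Λ) →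
          ExpBound (fun lam : ℂ => (List.ofFn fun i : Fin L =>
            NormedSpace.exp ((lam / 2) • f i)).prod) (L * (Λ / 2)) := by
        intro f hf
        have h := expBound_list (l := List.ofFn fun i : Fin L =>
            (fun lam : ℂ => NormedSpace.exp ((lam / 2) • f i))) (Λ / 2) (by positivity) ?_
        · refine (h.congr fun μ => ?_).mono (by positivity) ?_
          · congr 1
            · simp only [List.map_ofFn]
              congr 1
          · simp
        · intro g hg
          rw [List.mem_ofFn] at hg
          obtain ⟨i, rfl⟩ := hg
          exact (expBound_exp_half (f i)).mono (by positivity) (by linarith [hf i])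
      have h1 := hlist H hH
      have h2 := hlist (fun i => H i.rev) (fun i => hH i.rev)
      refine ((h1.mul h2 (by positivity) (by positivity)).congr fun μ => by rw [suzuki]).mono
        (by positivity) ?_
      rw [show ((1:ℕ) - 1 : ℕ) = 0 from rfl, pow_zero, one_mul]
      exact le_of_eq (by ring)
    | (m + 2) =>
      have hprev := ih (m + 1) (by omega)
      have hps := suzukiP_mem (m + 2) (by omega)
      set B : ℝ := (5 : ℝ) ^ ((m + 1 : ℕ) - 1) * L * Λ with hB
      have hB0 : 0 ≤ B := by rw [hB]; positivity
      have hp : ‖((suzukiP (m + 2) : ℝ) : ℂ)‖ ≤ 1 / 2 := by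
        rw [Complex.norm_real, Real.norm_eq_abs, abs_of_pos hps.1]; exact hps.2
      have hq : ‖(1 - 4 * ((suzukiP (m + 2) : ℝ) : ℂ))‖ ≤ 1 := by
        have : (1 - 4 * ((suzukiP (m + 2) : ℝ) : ℂ)) = ((1 - 4 * suzukiP (m + 2) : ℝ) : ℂ) := by
          push_cast; ring
        rw [this, Complex.norm_real, Real.norm_eq_abs, abs_le]
        constructor <;> nlinarith [hps.1, hps.2]
      have hfp : ExpBound (fun μ : ℂ => suzuki H (m + 1) ((suzukiP (m + 2) : ℂ) * μ))
          ((1 / 2) * B) := hprev.scale _ _ hp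
      have hfq : ExpBound (fun μ : ℂ => suzuki H (m + 1) ((1 - 4 * (suzukiP (m + 2) : ℂ)) * μ))
          ((1 : ℝ) * B) := hprev.scale _ _ hq
      have hhalf : (0:ℝ) ≤ 1 / 2 * B := by positivity
      have h5 := ((((hfp.mul hfp hhalf hhalf).mul hfq (by positivity) (by positivity)).mul
        hfp (by positivity) hhalf).mul hfp (by positivity) hhalf)
      refine (h5.congr fun μ => ?_).mono (by positivity) ?_
      · rw [suzuki]
        simp only [pow_two, mul_assoc]
      · have h1 : ((m + 2 : ℕ) - 1 : ℕ) = m + 1 := by omega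
        rw [h1, hB]
        have h2 : ((m + 1 : ℕ) - 1 : ℕ) = m := by omega
        rw [h2]
        have h5pow : (5:ℝ) ^ (m+1) * L * Λ = 5 * (5 ^ m * L * Λ) := by ring
        linarith [hMnn m, h5pow]

/-- Power series coefficients (into a finite-dimensional space) are unique. -/
lemma coeff_unique {f : ℂ → Matrix (Fin n) (Fin n) ℂ} {C c : ℕ → Matrix (Fin n) (Fin n) ℂ}
    (hC : ∀ μ : ℂ, HasSum (fun j => μ ^ j • C j) (f μ))
    (hc : ∀ μ : ℂ, HasSum (fun j => μ ^ j • c j) (f μ)) (j : ℕ) : C j = c j := by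
  have key : ∀ d : ℕ → Matrix (Fin n) (Fin n) ℂ,
      (∀ μ : ℂ, HasSum (fun j => μ ^ j • d j) (f μ)) →
      HasFPowerSeriesAt f
        (fun j => ContinuousMultilinearMap.mkPiRing ℂ (Fin j) (d j)) 0 := by
    intro d hd
    set p : FormalMultilinearSeries ℂ ℂ (Matrix (Fin n) (Fin n) ℂ) :=
      fun j => ContinuousMultilinearMap.mkPiRing ℂ (Fin j) (d j) with hp
    have hnp : ∀ j, ‖p j‖ = ‖d j‖ := fun j => ContinuousMultilinearMap.norm_mkPiRing _
    have happ : ∀ (j : ℕ) (y : ℂ), (p j fun _ => y) = y ^ j • d j := by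
      intro j y
      rw [hp]
      simp [ContinuousMultilinearMap.mkPiRing_apply]
    have hrad : (1 : ENNReal) ≤ p.radius := by
      apply FormalMultilinearSeries.le_radius_of_tendsto (l := 0)
        (r := (1 : NNReal))
      have hsum : Summable fun j => (2 : ℂ) ^ j • d j := (hd 2).summable
      have h0 : Filter.Tendsto (fun j => ‖(2 : ℂ) ^ j • d j‖) Filter.atTop (nhds 0) := by
        simpa using hsum.tendsto_atTop_zero.norm
      have hbound : ∀ j, ‖p j‖ * (1 : ℝ) ^ j ≤ ‖(2 : ℂ) ^ j • d j‖ := by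
        intro j
        rw [one_pow, mul_one, hnp, norm_smul, norm_pow]
        have h2 : (1:ℝ) ≤ ‖(2:ℂ)‖ ^ j := one_le_pow₀ (by norm_num)
        nlinarith [norm_nonneg (d j)]
      exact squeeze_zero (fun j => by positivity) hbound h0
    refine HasFPowerSeriesOnBall.hasFPowerSeriesAt (r := 1) ⟨hrad, one_pos, ?_⟩
    intro y _
    rw [zero_add]
    have := hd y
    simp only [happ]
    exact this
  have hpq := (key C hC).eq_formalMultilinearSeries (key c hc)
  have := congrFun hpq j
  have happ := congrArg (fun F => F (fun _ => (1 : ℂ))) this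
  simpa [ContinuousMultilinearMap.mkPiRing_apply] using happ

lemma real_tail_le (y : ℝ) (hy : 0 ≤ y) (m j : ℕ) :
    y ^ (m + j) / (m + j)! ≤ y ^ m / (m)! * (y ^ j / (j)!) := by
  have hfac : ((m)! : ℝ) * (j)! ≤ ((m + j)! : ℝ) := by
    exact_mod_cast Nat.le_of_dvd (Nat.factorial_pos _)
      (Nat.factorial_mul_factorial_dvd_factorial_add m j)
  have hfacpos : (0:ℝ) < ((m)! : ℝ) * (j)! := by positivity
  calc y ^ (m + j) / ((m + j)! : ℝ) = (y ^ m * y ^ j) / ((m + j)! : ℝ) := by rw [pow_add]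
    _ ≤ (y ^ m * y ^ j) / (((m)! : ℝ) * (j)!) :=
        div_le_div_of_nonneg_left (by positivity) hfacpos hfac
    _ = y ^ m / (m)! * (y ^ j / (j)!) := (div_mul_div_comm _ _ _ _).symm

lemma summable_tail (y : ℝ) (hy : 0 ≤ y) (m : ℕ) :
    Summable (fun j => y ^ (m + j) / (m + j)!) := by
  apply Summable.of_nonneg_of_le (fun j => by positivity) (real_tail_le y hy m)
  exact (Real.summable_pow_div_factorial y).mul_left _

lemma tsum_tail_le (y : ℝ) (hy : 0 ≤ y) (m : ℕ) :
    ∑' j : ℕ, y ^ (m + j) / (m + j)! ≤ y ^ m / (m)! * Real.exp y := by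
  calc ∑' j : ℕ, y ^ (m + j) / (m + j)!
      ≤ ∑' j : ℕ, y ^ m / (m)! * (y ^ j / (j)!) :=
        Summable.tsum_le_tsum (real_tail_le y hy m) (summable_tail y hy m)
          ((Real.summable_pow_div_factorial y).mul_left _)
    _ = y ^ m / (m)! * ∑' j : ℕ, y ^ j / (j)! := tsum_mul_left
    _ = y ^ m / (m)! * Real.exp y := by
        rw [Real.exp_eq_exp_ℝ, NormedSpace.exp_eq_tsum_div]

/-- Main tail estimate. -/
lemma tail_bound (d : ℕ → Matrix (Fin n) (Fin n) ℂ) (M : ℝ) (hM : 0 ≤ M)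
    (hd : ∀ j, ‖d j‖ ≤ M ^ j / (j)!) (lam : ℂ) (m : ℕ) :
    ‖∑' j : ℕ, lam ^ (m + j) • d (m + j)‖ ≤
      (‖lam‖ * M) ^ m / (m)! * Real.exp (‖lam‖ * M) := by
  set y : ℝ := ‖lam‖ * M with hy
  have hy0 : 0 ≤ y := mul_nonneg (norm_nonneg _) hM
  have hterm : ∀ j, ‖lam ^ (m + j) • d (m + j)‖ ≤ y ^ (m + j) / (m + j)! := by
    intro j
    rw [norm_smul, norm_pow, hy, mul_pow, mul_div_assoc]
    gcongr
    exact hd _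
  have hsum : Summable fun j => ‖lam ^ (m + j) • d (m + j)‖ :=
    Summable.of_nonneg_of_le (fun j => norm_nonneg _) hterm (summable_tail y hy0 m)
  calc ‖∑' j : ℕ, lam ^ (m + j) • d (m + j)‖
      ≤ ∑' j : ℕ, ‖lam ^ (m + j) • d (m + j)‖ := norm_tsum_le_tsum_norm hsum
    _ ≤ ∑' j : ℕ, y ^ (m + j) / (m + j)! := Summable.tsum_le_tsum hterm hsum (summable_tail y hy0 m)
    _ ≤ y ^ m / (m)! * Real.exp y := tsum_tail_le y hy0 m

lemma norm_exp_le (B : Matrix (Fin n) (Fin n) ℂ) :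
    ‖NormedSpace.exp B‖ ≤ Real.exp ‖B‖ := by
  have hterm : ∀ j : ℕ, ‖((j)! : ℂ)⁻¹ • B ^ j‖ ≤ ‖B‖ ^ j / (j)! := by
    intro j
    rw [norm_smul, norm_inv, Complex.norm_natCast]
    rw [div_eq_inv_mul]
    gcongr
    exact norm_pow_le_pow B j
  have hsum : Summable fun j : ℕ => ‖((j)! : ℂ)⁻¹ • B ^ j‖ :=
    Summable.of_nonneg_of_le (fun j => norm_nonneg _) hterm
      (Real.summable_pow_div_factorial ‖B‖)
  rw [NormedSpace.exp_eq_tsum (𝕂 := ℂ)]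
  calc ‖∑' j : ℕ, ((j)! : ℂ)⁻¹ • B ^ j‖
      ≤ ∑' j : ℕ, ‖((j)! : ℂ)⁻¹ • B ^ j‖ := norm_tsum_le_tsum_norm hsum
    _ ≤ ∑' j : ℕ, ‖B‖ ^ j / (j)! :=
        Summable.tsum_le_tsum hterm hsum (Real.summable_pow_div_factorial ‖B‖)
    _ = Real.exp ‖B‖ := by rw [Real.exp_eq_exp_ℝ, NormedSpace.exp_eq_tsum_div]

end TrotterAux

/-- Let `H_1, …, H_L` (`L ≥ 1`) be Hermitian `n×n` complex matrices with
`Λ := max_i ‖H_i‖`, let `k ≥ 1`, `λ ∈ ℂ` and `κ := 2·5^{k−1}`.  With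
`V(λ/2) := exp(λ Σ_i H_i / 2)` and
`D(λ/2) := R_{2k}(V(λ/2)) − R_{2k}(S^{(2k)}(λ/2))` (where `C_j` are the power-series
coefficients of the `(2k)`-th order Trotter–Suzuki formula `S^{(2k)}(λ/2)` in `λ`), we have
`‖V(λ/2)† D(λ/2) + D(λ/2) V(λ/2)†‖ ≤ 4 (κ|λ|LΛ/2)^{2k+1} / (2k+1)! · exp([κ+1]|λ|LΛ/2)`. -/
theorem opNorm_Vdagger_D_add_D_Vdagger_le {n L : ℕ} (hL : 1 ≤ L)
    (H : Fin L → Matrix (Fin n) (Fin n) ℂ) (hH : ∀ i, (H i).IsHermitian)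
    (Λ : ℝ) (hΛ : IsGreatest (Set.range fun i => ‖H i‖) Λ)
    (k : ℕ) (hk : 1 ≤ k) (lam : ℂ)
    (C : ℕ → Matrix (Fin n) (Fin n) ℂ)
    (hC : ∀ μ : ℂ, HasSum (fun j : ℕ => μ ^ j • C j) (suzuki H k (μ / 2))) :
    ‖(NormedSpace.exp ((lam / 2) • ∑ i, H i))ᴴ *
          ((∑' j : ℕ, lam ^ (2 * k + 1 + j) •
              (((2 * k + 1 + j)! : ℂ)⁻¹ • ((2 : ℂ)⁻¹ • ∑ i, H i) ^ (2 * k + 1 + j))) -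
            ∑' j : ℕ, lam ^ (2 * k + 1 + j) • C (2 * k + 1 + j)) +
        ((∑' j : ℕ, lam ^ (2 * k + 1 + j) •
              (((2 * k + 1 + j)! : ℂ)⁻¹ • ((2 : ℂ)⁻¹ • ∑ i, H i) ^ (2 * k + 1 + j))) -
            ∑' j : ℕ, lam ^ (2 * k + 1 + j) • C (2 * k + 1 + j)) *
          (NormedSpace.exp ((lam / 2) • ∑ i, H i))ᴴ‖ ≤
      4 * ((2 * 5 ^ (k - 1) : ℝ) * ‖lam‖ * L * Λ / 2) ^ (2 * k + 1) /
          ((2 * k + 1)! : ℝ) *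
        Real.exp (((2 * 5 ^ (k - 1) : ℝ) + 1) * ‖lam‖ * L * Λ / 2) := by
  have hHi : ∀ i, ‖H i‖ ≤ Λ := fun i => hΛ.2 ⟨i, rfl⟩
  have hΛ0 : 0 ≤ Λ := le_trans (norm_nonneg (H ⟨0, hL⟩)) (hHi ⟨0, hL⟩)
  set x : ℝ := ‖lam‖ with hx
  have hx0 : 0 ≤ x := norm_nonneg lam
  set m : ℕ := 2 * k + 1 with hm
  set A : Matrix (Fin n) (Fin n) ℂ := (2 : ℂ)⁻¹ • ∑ i, H i with hA
  set M : ℝ := 5 ^ (k - 1) * L * Λ with hM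
  have hM0 : 0 ≤ M := by positivity
  -- norm of the sum of the `H i`
  have hsumH : ‖∑ i, H i‖ ≤ L * Λ := by
    calc ‖∑ i, H i‖ ≤ ∑ i, ‖H i‖ := norm_sum_le _ _
      _ ≤ ∑ _i : Fin L, Λ := Finset.sum_le_sum fun i _ => hHi i
      _ = L * Λ := by simp [mul_comm]
  have hnA : ‖A‖ ≤ L * Λ / 2 := by
    rw [hA, norm_smul, norm_inv]
    have : ‖(2:ℂ)‖ = 2 := by norm_num
    rw [this]
    rw [inv_mul_eq_div, div_le_div_iff₀ (by norm_num) (by norm_num)]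
    linarith [hsumH]
  -- coefficients of the Suzuki formula
  have hsz := TrotterAux.expBound_suzuki H Λ hΛ0 hHi k
  have hEB : TrotterAux.ExpBound (fun μ : ℂ => suzuki H k (μ / 2)) M := by
    have h1 := hsz.scale ((2:ℂ)⁻¹) (1/2) (by norm_num [norm_inv])
    have h2 : TrotterAux.ExpBound (fun μ : ℂ => suzuki H k (μ / 2)) ((1/2) * M) := by
      refine h1.congr fun μ => ?_
      rw [inv_mul_eq_div]
    exact h2.mono (by positivity) (by linarith)
  obtain ⟨c, hcb, hcs⟩ := hEB
  have hCb : ∀ j, ‖C j‖ ≤ M ^ j / (j)! := fun j =>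
    (TrotterAux.coeff_unique hC hcs j) ▸ hcb j
  -- the two tails
  have hTS := TrotterAux.tail_bound C M hM0 hCb lam m
  have hdV : ∀ j : ℕ, ‖((j)! : ℂ)⁻¹ • A ^ j‖ ≤ (L * Λ / 2) ^ j / (j)! := by
    intro j
    rw [norm_smul, norm_inv, Complex.norm_natCast, div_eq_inv_mul]
    gcongr
    exact (TrotterAux.norm_pow_le_pow A j).trans (pow_le_pow_left₀ (norm_nonneg A) hnA j)
  have hTV := TrotterAux.tail_bound (fun j => ((j)! : ℂ)⁻¹ • A ^ j) (L * Λ / 2)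
    (by positivity) hdV lam m
  -- monotonicity in the exponent
  set X : ℝ := x * M with hX
  have hX0 : 0 ≤ X := by positivity
  have h51 : (1:ℝ) ≤ 5 ^ (k - 1) := one_le_pow₀ (by norm_num)
  have haX : x * (L * Λ / 2) ≤ X := by
    rw [hX, hM]
    nlinarith [mul_nonneg (mul_nonneg hx0 (Nat.cast_nonneg (α := ℝ) L)) hΛ0]
  set Bnd : ℝ := X ^ m / (m)! * Real.exp X with hBnd
  have hBnd0 : 0 ≤ Bnd := by positivity
  have hTV' : ‖∑' j : ℕ, lam ^ (m + j) • (((m + j)! : ℂ)⁻¹ • A ^ (m + j))‖ ≤ Bnd := by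
    refine hTV.trans ?_
    rw [hBnd]
    gcongr <;> first | positivity | exact haX
  have hTS' : ‖∑' j : ℕ, lam ^ (m + j) • C (m + j)‖ ≤ Bnd := hTS
  -- norm of V†
  set V : Matrix (Fin n) (Fin n) ℂ := NormedSpace.exp ((lam / 2) • ∑ i, H i) with hV
  have hnV : ‖Vᴴ‖ ≤ Real.exp (x * L * Λ / 2) := by
    rw [Matrix.l2_opNorm_conjTranspose]
    refine (TrotterAux.norm_exp_le _).trans ?_
    apply Real.exp_le_exp.mpr
    rw [norm_smul]
    have h2 : ‖lam / 2‖ = x / 2 := by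
      rw [norm_div]
      norm_num [hx]
    rw [h2]
    nlinarith [hsumH, norm_nonneg (∑ i, H i)]
  -- assembling
  set D : Matrix (Fin n) (Fin n) ℂ :=
    (∑' j : ℕ, lam ^ (m + j) • (((m + j)! : ℂ)⁻¹ • A ^ (m + j))) -
      ∑' j : ℕ, lam ^ (m + j) • C (m + j) with hD
  have hnD : ‖D‖ ≤ 2 * Bnd := by
    rw [hD]
    calc ‖_ - _‖ ≤ ‖∑' j : ℕ, lam ^ (m + j) • (((m + j)! : ℂ)⁻¹ • A ^ (m + j))‖ +
        ‖∑' j : ℕ, lam ^ (m + j) • C (m + j)‖ := norm_sub_le _ _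
      _ ≤ 2 * Bnd := by linarith
  have key : ‖Vᴴ * D + D * Vᴴ‖ ≤ 4 * Bnd * Real.exp (x * L * Λ / 2) := by
    calc ‖Vᴴ * D + D * Vᴴ‖ ≤ ‖Vᴴ * D‖ + ‖D * Vᴴ‖ := norm_add_le _ _
      _ ≤ ‖Vᴴ‖ * ‖D‖ + ‖D‖ * ‖Vᴴ‖ := add_le_add (norm_mul_le _ _) (norm_mul_le _ _)
      _ ≤ 4 * Bnd * Real.exp (x * L * Λ / 2) := by
          have e1 : ‖Vᴴ‖ * ‖D‖ ≤ Real.exp (x * L * Λ / 2) * (2 * Bnd) :=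
            mul_le_mul hnV hnD (norm_nonneg _) (Real.exp_pos _).le
          have e2 : ‖D‖ * ‖Vᴴ‖ ≤ (2 * Bnd) * Real.exp (x * L * Λ / 2) :=
            mul_le_mul hnD hnV (norm_nonneg _) (by positivity)
          nlinarith [Real.exp_pos (x * L * Λ / 2)]
  refine key.trans ?_
  have hXeq : (2 * 5 ^ (k - 1) : ℝ) * x * L * Λ / 2 = X := by
    rw [hX, hM]; ring
  have hexpeq : ((2 * 5 ^ (k - 1) : ℝ) + 1) * x * L * Λ / 2 = X + x * L * Λ / 2 := by
    rw [hX, hM]; ring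
  rw [hXeq, hexpeq, Real.exp_add]
  exact le_of_eq (by rw [hBnd]; ring)
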